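/- For every R = (R₁,R₂) ∈ ℝ², every φ ∈ L²(ℝ, ℂ) and every g ∈ L²(ℝ, ℂ), the magnetic translation intertwines with the Wigner-type transform: 𝔪_R [W(φ, g)] = W(φ, t_R g), where (t_R g)(k) := e^{−i b R₁ R₂} e^{i k R₂} g(k − b R₁). -/

import Mathlib

open MeasureTheory Real

/-- Wigner-type transform: `W(φ,g)(x₁,x₂) = (2π)^{-1/2} ∫ e^{-i k x₂} φ(x₁ - k/b) g(k) dk`. -/
noncomputable def wigner (b : ℝ) (φ g : ℝ → ℂ) : ℝ × ℝ → ℂ := fun x =>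
  (Real.sqrt (2 * π))⁻¹ *
    ∫ k : ℝ, Complex.exp (-Complex.I * k * x.2) * φ (x.1 - k / b) * g k

/-- The magnetic translation `𝔪_R`:
`(𝔪_R f)(x₁,x₂) = e^{−i b R₁ x₂} f(x₁ − R₁, x₂ − R₂)`. -/
noncomputable def magTrans (b : ℝ) (R : ℝ × ℝ) (f : ℝ × ℝ → ℂ) : ℝ × ℝ → ℂ := fun x =>
  Complex.exp (-Complex.I * b * R.1 * x.2) * f (x.1 - R.1, x.2 - R.2)

/-- Magnetic translations intertwine with the Wigner-type transform:
`𝔪_R[W(φ,g)] = W(φ, t_R g)` where `(t_R g)(k) = e^{−i b R₁ R₂} e^{i k R₂} g(k − b R₁)`. -/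
theorem magTrans_wigner (b : ℝ) (hb : b ≠ 0) (R : ℝ × ℝ) (φ g : ℝ → ℂ)
    (hφ : MemLp φ 2 (volume : Measure ℝ)) (hg : MemLp g 2 (volume : Measure ℝ)) :
    ∀ x : ℝ × ℝ,
      magTrans b R (wigner b φ g) x =
        wigner b φ
          (fun k => Complex.exp (-Complex.I * b * R.1 * R.2) *
            Complex.exp (Complex.I * k * R.2) * g (k - b * R.1)) x := by
  intro x
  simp only [magTrans, wigner]
  rw [← MeasureTheory.integral_add_right_eq_self
      (fun k : ℝ => Complex.exp (-Complex.I * k * x.2) * φ (x.1 - k / b) *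
        (Complex.exp (-Complex.I * b * R.1 * R.2) * Complex.exp (Complex.I * k * R.2) *
          g (k - b * R.1))) (b * R.1)]
  rw [mul_left_comm]
  congr 1
  rw [← MeasureTheory.integral_const_mul]
  refine MeasureTheory.integral_congr_ae (Filter.Eventually.of_forall fun k => ?_)
  have harg : x.1 - R.1 - k / b = x.1 - (k + b * R.1) / b := by field_simp; ring
  simp only [add_sub_cancel_right, harg]
  trans (Complex.exp (-Complex.I * b * R.1 * x.2 + -Complex.I * k * ((x.2 : ℂ) - R.2)) *
      (φ (x.1 - (k + b * R.1) / b) * g k))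
  · rw [Complex.exp_add]; push_cast; ring
  · rw [show -Complex.I * b * R.1 * x.2 + -Complex.I * k * ((x.2 : ℂ) - R.2) =
        -Complex.I * ((k : ℂ) + b * R.1) * x.2 + (-Complex.I * b * R.1 * R.2 +
          Complex.I * ((k : ℂ) + b * R.1) * R.2) by ring, Complex.exp_add, Complex.exp_add]
    push_cast
    ring
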